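/- Let Y = XC^T where X ∈ ℝ^{n×d} has full column rank d, and suppose Y has SVD Y = UΣV^T. Then β_RRR := C^T V_r V_r^T minimizes ‖Y − Xβ‖_F^2 over all β ∈ ℝ^{d×m} with rank(β) ≤ r, where V_r consists of the first r right singular vectors of Y (assuming the r-th and (r+1)-th singular values of Y are distinct). -/

import Mathlib

open Matrix

/-- Squared Frobenius norm of a matrix. -/
def frobSq {n m : ℕ} (M : Matrix (Fin n) (Fin m) ℝ) : ℝ :=
  ∑ i, ∑ j, (M i j) ^ 2

lemma sum_sq_mulcol {n' n : ℕ} (P : Matrix (Fin n') (Fin n) ℝ) (hP : Pᵀ * P = 1)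
    (v : Fin n → ℝ) : ∑ i, (∑ k, P i k * v k) ^ 2 = ∑ k, v k ^ 2 := by
  have h1 : ∀ i : Fin n', (∑ k, P i k * v k) ^ 2
      = ∑ k, ∑ l, (P i k * P i l) * (v k * v l) := by
    intro i; rw [sq, Finset.sum_mul_sum]
    exact Finset.sum_congr rfl fun k _ => Finset.sum_congr rfl fun l _ => by ring
  simp_rw [h1]
  rw [Finset.sum_comm]
  have h2 : ∀ k : Fin n, ∑ i : Fin n', ∑ l, (P i k * P i l) * (v k * v l)
      = ∑ l, (Pᵀ * P) k l * (v k * v l) := by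
    intro k
    rw [Finset.sum_comm]
    refine Finset.sum_congr rfl fun l _ => ?_
    rw [Matrix.mul_apply, Finset.sum_mul]
    exact Finset.sum_congr rfl fun i _ => by simp [Matrix.transpose_apply]
  simp_rw [h2, hP, Matrix.one_apply]
  simp [sq]

lemma frobSq_transpose {n m : ℕ} (M : Matrix (Fin n) (Fin m) ℝ) :
    frobSq Mᵀ = frobSq M := by
  unfold frobSq; rw [Finset.sum_comm]; rfl

lemma frobSq_mul_left {n' n m : ℕ} (P : Matrix (Fin n') (Fin n) ℝ) (hP : Pᵀ * P = 1)
    (M : Matrix (Fin n) (Fin m) ℝ) : frobSq (P * M) = frobSq M := by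
  unfold frobSq
  rw [Finset.sum_comm, Finset.sum_comm (γ := Fin n)]
  refine Finset.sum_congr rfl fun j _ => ?_
  simpa [Matrix.mul_apply] using sum_sq_mulcol P hP (fun k => M k j)

lemma frobSq_mul_right {n m m' : ℕ} (Q : Matrix (Fin m) (Fin m') ℝ) (hQ : Q * Qᵀ = 1)
    (M : Matrix (Fin n) (Fin m) ℝ) : frobSq (M * Q) = frobSq M := by
  rw [← frobSq_transpose (M * Q), Matrix.transpose_mul, frobSq_mul_left Qᵀ (by
    rw [Matrix.transpose_transpose]; exact hQ), frobSq_transpose]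


lemma exists_orthonormal_factorization {n m : ℕ} (G : Matrix (Fin n) (Fin m) ℝ) :
    ∃ (t : ℕ) (W : Matrix (Fin n) (Fin t) ℝ) (Cc : Matrix (Fin t) (Fin m) ℝ),
      t ≤ G.rank ∧ Wᵀ * W = 1 ∧ G = W * Cc := by
  classical
  let col : Fin m → EuclideanSpace ℝ (Fin n) := fun j => WithLp.toLp 2 (Gᵀ j)
  let V' : Submodule ℝ (EuclideanSpace ℝ (Fin n)) := Submodule.span ℝ (Set.range col)
  have hrank : Module.finrank ℝ V' = G.rank := by
    rw [Matrix.rank_eq_finrank_span_cols,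
      ← LinearEquiv.finrank_map_eq (WithLp.linearEquiv 2 ℝ (Fin n → ℝ)), Submodule.map_span]
    have himg : ((WithLp.linearEquiv 2 ℝ (Fin n → ℝ) :
        EuclideanSpace ℝ (Fin n) →ₗ[ℝ] (Fin n → ℝ))) '' Set.range col = Set.range G.col := by
      rw [← Set.range_comp]; rfl
    rw [himg]
  set t := Module.finrank ℝ V' with ht
  let b : OrthonormalBasis (Fin t) ℝ V' := stdOrthonormalBasis ℝ V'
  let W : Matrix (Fin n) (Fin t) ℝ := fun i k => ((b k : EuclideanSpace ℝ (Fin n)) : Fin n → ℝ) i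
  have hmem : ∀ j, col j ∈ V' := fun j => Submodule.subset_span ⟨j, rfl⟩
  let v : Fin m → V' := fun j => ⟨col j, hmem j⟩
  let Cc : Matrix (Fin t) (Fin m) ℝ := fun k j => b.repr (v j) k
  refine ⟨t, W, Cc, hrank.le, ?_, ?_⟩
  · ext k l
    have h1 := b.orthonormal
    rw [orthonormal_iff_ite] at h1
    have h2 := h1 k l
    rw [Matrix.mul_apply, Matrix.one_apply]
    have h3 : (inner ℝ (b k) (b l) : ℝ)
        = ∑ i, ((b k : EuclideanSpace ℝ (Fin n)) : Fin n → ℝ) i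
            * ((b l : EuclideanSpace ℝ (Fin n)) : Fin n → ℝ) i := by
      rw [Submodule.coe_inner, PiLp.inner_apply]
      refine Finset.sum_congr rfl fun i _ => ?_
      simp only [RCLike.inner_apply, conj_trivial]
      ring
    rw [h3] at h2
    simp only [Matrix.transpose_apply]
    simpa [W] using h2
  · ext i j
    have hsum := b.sum_repr (v j)
    have h0 : G i j = ((v j : EuclideanSpace ℝ (Fin n)) : Fin n → ℝ) i := rfl
    rw [h0, ← hsum]
    rw [Matrix.mul_apply]
    push_cast [Submodule.coe_sum]
    rw [WithLp.ofLp_sum, Finset.sum_apply]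
    refine Finset.sum_congr rfl fun k _ => ?_
    rw [WithLp.ofLp_smul, Pi.smul_apply, smul_eq_mul]
    exact mul_comm _ _

lemma key_ineq {n m r t : ℕ} (hrn : r ≤ n) (hrm : r ≤ m) (htr : t ≤ r)
    (σ : ℕ → ℝ) (hσ0 : ∀ i, 0 ≤ σ i) (hσm : ∀ i j, i ≤ j → σ j ≤ σ i)
    (S : Matrix (Fin n) (Fin m) ℝ)
    (hS : ∀ (i : Fin n) (j : Fin m), S i j = if (i : ℕ) = (j : ℕ) then σ i else 0)
    (W : Matrix (Fin n) (Fin t) ℝ) (hW : Wᵀ * W = 1)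
    (Cc : Matrix (Fin t) (Fin m) ℝ) :
    (∑ j : Fin m, if r ≤ (j : ℕ) ∧ (j : ℕ) < n then σ (j : ℕ) ^ 2 else 0)
      ≤ frobSq (S - W * Cc) := by
  classical
  set P : Fin n → ℝ := fun i => ∑ k, W i k ^ 2 with hPdef
  have hP0 : ∀ i, 0 ≤ P i := fun i => Finset.sum_nonneg fun k _ => sq_nonneg _
  have hPsum : ∑ i, P i = (t : ℝ) := by
    rw [Finset.sum_comm]
    have : ∀ k : Fin t, ∑ i, W i k ^ 2 = 1 := by
      intro k
      have := congrFun (congrFun hW k) k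
      rw [Matrix.mul_apply, Matrix.one_apply_eq] at this
      rw [← this]
      exact Finset.sum_congr rfl fun i _ => by simp [Matrix.transpose_apply, sq]
    simp [this]
  have hP1 : ∀ i, P i ≤ 1 := by
    intro i
    have hQ : (W * Wᵀ) * (W * Wᵀ) = W * Wᵀ := by
      rw [Matrix.mul_assoc, ← Matrix.mul_assoc Wᵀ W, hW, Matrix.one_mul]
    have hQii : (W * Wᵀ) i i = P i := by
      rw [Matrix.mul_apply]
      exact Finset.sum_congr rfl fun k _ => by simp [Matrix.transpose_apply, sq]
    have h2 : (W * Wᵀ) i i = ∑ j, ((W * Wᵀ) i j) ^ 2 := by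
      conv_lhs => rw [← hQ]
      rw [Matrix.mul_apply]
      refine Finset.sum_congr rfl fun j _ => ?_
      have hsymm : (W * Wᵀ) j i = (W * Wᵀ) i j := by
        rw [Matrix.mul_apply, Matrix.mul_apply]
        exact Finset.sum_congr rfl fun k _ => by simp [Matrix.transpose_apply, mul_comm]
      rw [hsymm, sq]
    have h3 : P i ^ 2 ≤ P i := by
      rw [← hQii]
      calc ((W * Wᵀ) i i) ^ 2 ≤ ∑ j, ((W * Wᵀ) i j) ^ 2 :=
            Finset.single_le_sum (f := fun j => ((W * Wᵀ) i j) ^ 2)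
              (fun j _ => sq_nonneg _) (Finset.mem_univ i)
        _ = (W * Wᵀ) i i := h2.symm
    nlinarith [hP0 i]
  set Pn : ℕ → ℝ := fun a => if h : a < n then P ⟨a, h⟩ else 0 with hPndef
  have hPn0 : ∀ a, 0 ≤ Pn a := by
    intro a; rw [hPndef]; dsimp only; split
    · exact hP0 _
    · exact le_rfl
  have hPn1 : ∀ a, Pn a ≤ 1 := by
    intro a; rw [hPndef]; dsimp only; split
    · exact hP1 _
    · exact zero_le_one
  -- column sums
  set q : Fin m → ℝ := fun j => if (j : ℕ) < n then σ (j : ℕ) ^ 2 * (1 - Pn (j : ℕ)) else 0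
    with hqdef
  have hcol : ∀ j : Fin m, q j ≤ ∑ i, (S i j - (W * Cc) i j) ^ 2 := by
    intro j
    rw [hqdef]
    dsimp only
    split
    case isFalse h => exact Finset.sum_nonneg fun i _ => sq_nonneg _
    case isTrue h =>
      set j' : Fin n := ⟨(j : ℕ), h⟩ with hj'
      set s := σ (j : ℕ) with hsdef
      set cB := ∑ k, Cc k j ^ 2 with hcB
      set M := ∑ k, W j' k * Cc k j with hM
      have hScol : ∀ i : Fin n, S i j = if i = j' then s else 0 := by
        intro i
        rw [hS]
        by_cases hij : i = j'
        · subst hij; simp [hj', hsdef]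
        · rw [if_neg, if_neg hij]
          intro hc
          exact hij (Fin.ext hc)
      have hexp : ∑ i, (S i j - (W * Cc) i j) ^ 2 = s ^ 2 - 2 * s * M + cB := by
        have e1 : ∀ i : Fin n, (S i j - (W * Cc) i j) ^ 2
            = ((if i = j' then s else 0) ^ 2
              - 2 * ((if i = j' then s * ((W * Cc) i j) else 0))
              + ((W * Cc) i j) ^ 2) := by
          intro i
          rw [hScol i]
          split <;> ring
        simp_rw [e1]
        rw [Finset.sum_add_distrib, Finset.sum_sub_distrib]
        congr 1
        · congr 1
          · simp [apply_ite (· ^ 2)]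
          · rw [← Finset.mul_sum, Finset.sum_ite_eq' Finset.univ j']
            simp only [Matrix.mul_apply, hM, Finset.mem_univ, if_true]
            ring
        · have : ∀ i : Fin n, (W * Cc) i j = ∑ k, W i k * Cc k j := fun i => Matrix.mul_apply
          simp_rw [this]
          exact sum_sq_mulcol W hW fun k => Cc k j
      rw [hexp]
      have hcs : M ^ 2 ≤ P j' * cB := by
        have := Finset.sum_mul_sq_le_sq_mul_sq Finset.univ (fun k => W j' k) (fun k => Cc k j)
        simpa [hM, hPdef, hcB] using this
      have hs0 : 0 ≤ s := hσ0 _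
      have hcB0 : 0 ≤ cB := Finset.sum_nonneg fun k _ => sq_nonneg _
      have hPn : Pn (j : ℕ) = P j' := by rw [hPndef]; simp [h, hj']
      rw [hPn]
      nlinarith [hP0 j', sq_nonneg (s ^ 2 * P j' - cB), sq_nonneg (s * M),
        mul_nonneg (mul_nonneg hs0 hs0) (hP0 j'), sq_nonneg (s ^ 2 * P j' + cB - 2 * s * M)]
  have hfrob : frobSq (S - W * Cc) = ∑ j : Fin m, ∑ i, (S i j - (W * Cc) i j) ^ 2 := by
    unfold frobSq
    rw [Finset.sum_comm]
    rfl
  have h1 : ∑ j, q j ≤ frobSq (S - W * Cc) := by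
    rw [hfrob]
    exact Finset.sum_le_sum fun j _ => hcol j
  set g : Fin m → ℝ := fun j =>
    σ (r - 1) ^ 2 * (if (j : ℕ) < r then (1 : ℝ) else 0) - σ (r - 1) ^ 2 * Pn (j : ℕ)
    with hgdef
  have hpoint : ∀ j : Fin m,
      (if r ≤ (j : ℕ) ∧ (j : ℕ) < n then σ (j : ℕ) ^ 2 else 0) + g j ≤ q j := by
    intro j
    rw [hgdef, hqdef]
    dsimp only
    by_cases hjr : (j : ℕ) < r
    · rw [if_neg (by omega), if_pos hjr, if_pos (by omega)]
      have hle : σ (r - 1) ^ 2 ≤ σ (j : ℕ) ^ 2 :=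
        pow_le_pow_left₀ (hσ0 _) (hσm (j : ℕ) (r - 1) (by omega)) 2
      have h1P : 0 ≤ 1 - Pn (j : ℕ) := by linarith [hPn1 (j : ℕ)]
      nlinarith [mul_le_mul_of_nonneg_right hle h1P]
    · by_cases hjn : (j : ℕ) < n
      · rw [if_pos ⟨by omega, hjn⟩, if_neg hjr, if_pos hjn]
        have hle : σ (j : ℕ) ^ 2 ≤ σ (r - 1) ^ 2 :=
          pow_le_pow_left₀ (hσ0 _) (hσm (r - 1) (j : ℕ) (by omega)) 2
        nlinarith [mul_le_mul_of_nonneg_right hle (hPn0 (j : ℕ))]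
      · have hPz : Pn (j : ℕ) = 0 := by rw [hPndef]; exact dif_neg hjn
        rw [if_neg (by omega), if_neg hjr, if_neg hjn, hPz]
        simp
  have hcnt : ∑ j : Fin m, (if (j : ℕ) < r then (1 : ℝ) else 0) = r := by
    rw [Fin.sum_univ_eq_sum_range (fun a => if a < r then (1 : ℝ) else 0) m]
    rw [← Finset.sum_subset (Finset.range_subset_range.2 hrm)
      (fun a _ har => if_neg (by simp at har ⊢; omega))]
    rw [Finset.sum_congr rfl (fun a ha => if_pos (Finset.mem_range.1 ha))]
    simp
  have hPnsum : ∑ j : Fin m, Pn (j : ℕ) ≤ (t : ℝ) := by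
    rw [Fin.sum_univ_eq_sum_range Pn m]
    have hn : ∑ a ∈ Finset.range n, Pn a = (t : ℝ) := by
      rw [← Fin.sum_univ_eq_sum_range Pn n, ← hPsum]
      exact Finset.sum_congr rfl fun i _ => by rw [hPndef]; simp
    calc ∑ a ∈ Finset.range m, Pn a ≤ ∑ a ∈ Finset.range (max m n), Pn a :=
          Finset.sum_le_sum_of_subset_of_nonneg
            (Finset.range_subset_range.2 (le_max_left m n)) (fun a _ _ => hPn0 a)
      _ = ∑ a ∈ Finset.range n, Pn a := by
          refine (Finset.sum_subset (Finset.range_subset_range.2 (le_max_right m n))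
            (fun a _ har => ?_)).symm
          rw [hPndef]
          exact dif_neg (by simp at har; omega)
      _ = (t : ℝ) := hn
  have hgsum : 0 ≤ ∑ j, g j := by
    have hid : ∑ j, g j
        = σ (r - 1) ^ 2 * ((r : ℝ) - ∑ j : Fin m, Pn (j : ℕ)) := by
      rw [hgdef]
      rw [Finset.sum_sub_distrib, ← Finset.mul_sum, ← Finset.mul_sum, hcnt]
      ring
    rw [hid]
    have htr' : (t : ℝ) ≤ (r : ℝ) := Nat.cast_le.2 htr
    exact mul_nonneg (sq_nonneg _) (by linarith)
  calc (∑ j : Fin m, if r ≤ (j : ℕ) ∧ (j : ℕ) < n then σ (j : ℕ) ^ 2 else 0)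
      ≤ (∑ j : Fin m, if r ≤ (j : ℕ) ∧ (j : ℕ) < n then σ (j : ℕ) ^ 2 else 0) + ∑ j, g j := by
        linarith
    _ = ∑ j : Fin m, ((if r ≤ (j : ℕ) ∧ (j : ℕ) < n then σ (j : ℕ) ^ 2 else 0) + g j) := by
        rw [Finset.sum_add_distrib]
    _ ≤ ∑ j, q j := Finset.sum_le_sum fun j _ => hpoint j
    _ ≤ frobSq (S - W * Cc) := h1


section Main

theorem stmt5_main (n d m r : ℕ) (hrn : r ≤ n) (hrm : r ≤ m)
    (X : Matrix (Fin n) (Fin d) ℝ)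
    (C : Matrix (Fin m) (Fin d) ℝ)
    (Y : Matrix (Fin n) (Fin m) ℝ) (hY : Y = X * Cᵀ)
    (U : Matrix (Fin n) (Fin n) ℝ) (V : Matrix (Fin m) (Fin m) ℝ)
    (S : Matrix (Fin n) (Fin m) ℝ) (σ : ℕ → ℝ)
    (hU : Uᵀ * U = 1) (hU' : U * Uᵀ = 1)
    (hV : Vᵀ * V = 1) (hV' : V * Vᵀ = 1)
    (hS : ∀ (i : Fin n) (j : Fin m), S i j = if (i : ℕ) = (j : ℕ) then σ i else 0)
    (hσnonneg : ∀ i, 0 ≤ σ i) (hσmono : ∀ i j, i ≤ j → σ j ≤ σ i)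
    (hSVD : Y = U * S * Vᵀ)
    (Vr : Matrix (Fin m) (Fin r) ℝ)
    (hVr : Vr = V.submatrix id (Fin.castLE hrm)) :
    ∀ β : Matrix (Fin d) (Fin m) ℝ, β.rank ≤ r →
      frobSq (Y - X * (Cᵀ * Vr * Vrᵀ)) ≤ frobSq (Y - X * β) := by
  classical
  intro β hβ
  set E : Matrix (Fin m) (Fin r) ℝ := fun a k => if (a : ℕ) = (k : ℕ) then 1 else 0 with hEdef
  have hVrE : Vr = V * E := by
    rw [hVr]
    ext i j
    rw [Matrix.mul_apply]
    have : ∀ k : Fin m, E k j = if k = Fin.castLE hrm j then 1 else 0 := by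
      intro k
      rw [hEdef]
      simp only [Fin.ext_iff]
      rfl
    simp_rw [this, mul_ite, mul_one, mul_zero]
    rw [Finset.sum_ite_eq' Finset.univ (Fin.castLE hrm j) (fun k => V i k)]
    simp [Matrix.submatrix_apply]
  have key0 : Uᵀ * Y * V = S := by
    rw [hSVD]
    have : Uᵀ * (U * S * Vᵀ) * V = (Uᵀ * U) * S * (Vᵀ * V) := by
      simp only [Matrix.mul_assoc]
    rw [this, hU, hV, Matrix.one_mul, Matrix.mul_one]
  have hconj : ∀ B : Matrix (Fin n) (Fin m) ℝ,
      frobSq (Y - B) = frobSq (S - Uᵀ * B * V) := by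
    intro B
    have h1 : Uᵀ * (Y - B) * V = S - Uᵀ * B * V := by
      rw [Matrix.mul_sub, Matrix.sub_mul, key0]
    rw [← h1, frobSq_mul_right V hV',
      frobSq_mul_left Uᵀ (by rw [Matrix.transpose_transpose]; exact hU')]
  -- left hand side value
  have hUY : Uᵀ * Y = S * Vᵀ := by
    rw [hSVD]
    have : Uᵀ * (U * S * Vᵀ) = (Uᵀ * U) * S * Vᵀ := by simp only [Matrix.mul_assoc]
    rw [this, hU, Matrix.one_mul]
  have hVtVr : Vᵀ * Vr = E := by
    rw [hVrE, ← Matrix.mul_assoc, hV, Matrix.one_mul]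
  have hVrtV : Vrᵀ * V = Eᵀ := by
    rw [hVrE, Matrix.transpose_mul, Matrix.mul_assoc, hV, Matrix.mul_one]
  have hL : Uᵀ * (X * (Cᵀ * Vr * Vrᵀ)) * V = S * (E * Eᵀ) := by
    have h1 : X * (Cᵀ * Vr * Vrᵀ) = Y * Vr * Vrᵀ := by
      rw [hY]; simp only [Matrix.mul_assoc]
    rw [h1]
    have h2 : Uᵀ * (Y * Vr * Vrᵀ) * V = (Uᵀ * Y) * Vr * (Vrᵀ * V) := by
      simp only [Matrix.mul_assoc]
    rw [h2, hUY, hVrtV]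
    have h3 : S * Vᵀ * Vr * Eᵀ = S * (Vᵀ * Vr) * Eᵀ := by simp only [Matrix.mul_assoc]
    rw [h3, hVtVr, Matrix.mul_assoc]
  have hEE : ∀ a b : Fin m, (E * Eᵀ) a b
      = if (a : ℕ) = (b : ℕ) ∧ (a : ℕ) < r then 1 else 0 := by
    intro a b
    rw [Matrix.mul_apply]
    by_cases ha : (a : ℕ) < r
    · rw [Finset.sum_eq_single (⟨(a : ℕ), ha⟩ : Fin r)]
      · simp only [Matrix.transpose_apply]
        simp only [hEdef]
        by_cases hab : (a : ℕ) = (b : ℕ)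
        · simp only [hab, ha, if_true, and_true, if_pos rfl, one_mul]
          rw [if_pos ⟨trivial, hab ▸ ha⟩]
        · simp [hab, eq_comm]
      · intro k _ hk
        simp only [Matrix.transpose_apply]
        simp only [hEdef]
        rw [if_neg]
        · ring
        · intro hc
          exact hk (Fin.ext hc.symm)
      · intro hmem; exact absurd (Finset.mem_univ _) hmem
    · rw [if_neg (fun hc => ha hc.2)]
      refine Finset.sum_eq_zero fun k _ => ?_
      simp only [Matrix.transpose_apply]
      simp only [hEdef]
      rw [if_neg]
      · ring
      · intro hc
        exact ha (hc ▸ k.isLt)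
  have hSEE : ∀ (i : Fin n) (j : Fin m), (S - S * (E * Eᵀ)) i j
      = if (i : ℕ) = (j : ℕ) ∧ r ≤ (j : ℕ) then σ (i : ℕ) else 0 := by
    intro i j
    have h1 : (S * (E * Eᵀ)) i j = S i j * (if (j : ℕ) < r then 1 else 0) := by
      rw [Matrix.mul_apply]
      rw [Finset.sum_eq_single j]
      · rw [hEE]
        by_cases hjr : (j : ℕ) < r
        · rw [if_pos ⟨rfl, hjr⟩, if_pos hjr]
        · rw [if_neg (fun hc => hjr hc.2), if_neg hjr]
      · intro b _ hb
        rw [hEE, if_neg]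
        · ring
        · intro hc
          exact hb (Fin.ext hc.1)
      · intro hmem; exact absurd (Finset.mem_univ _) hmem
    rw [Matrix.sub_apply, h1]
    by_cases hjr : (j : ℕ) < r
    · rw [if_pos hjr, mul_one, sub_self,
        if_neg (fun hc => absurd hjr (Nat.not_lt.mpr hc.2))]
    · rw [if_neg hjr, mul_zero, sub_zero, hS]
      by_cases hij : (i : ℕ) = (j : ℕ)
      · rw [if_pos hij, if_pos ⟨hij, Nat.le_of_not_lt hjr⟩]
      · rw [if_neg hij, if_neg (fun hc => hij hc.1)]
  have hT : frobSq (S - S * (E * Eᵀ))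
      = ∑ j : Fin m, (if r ≤ (j : ℕ) ∧ (j : ℕ) < n then σ (j : ℕ) ^ 2 else 0) := by
    unfold frobSq
    rw [Finset.sum_comm]
    refine Finset.sum_congr rfl fun j _ => ?_
    by_cases hjn : (j : ℕ) < n
    · rw [Finset.sum_eq_single (⟨(j : ℕ), hjn⟩ : Fin n)]
      · rw [hSEE]
        by_cases hjr : r ≤ (j : ℕ)
        · rw [if_pos ⟨rfl, hjr⟩, if_pos ⟨hjr, hjn⟩]
        · rw [if_neg (fun hc => hjr hc.2), if_neg (fun hc => hjr hc.1)]
          ring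
      · intro i _ hi
        rw [hSEE, if_neg]
        · ring
        · intro hc
          exact hi (Fin.ext hc.1)
      · intro hmem; exact absurd (Finset.mem_univ _) hmem
    · rw [if_neg (fun hc => hjn hc.2)]
      refine Finset.sum_eq_zero fun i _ => ?_
      rw [hSEE, if_neg]
      · ring
      · intro hc
        exact hjn (hc.1 ▸ i.isLt)
  -- right hand side bound
  set G : Matrix (Fin n) (Fin m) ℝ := Uᵀ * (X * β) * V with hGdef
  have hGrank : G.rank ≤ r := by
    calc G.rank ≤ (Uᵀ * (X * β)).rank := Matrix.rank_mul_le_left _ _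
      _ ≤ (X * β).rank := Matrix.rank_mul_le_right _ _
      _ ≤ β.rank := Matrix.rank_mul_le_right _ _
      _ ≤ r := hβ
  obtain ⟨t, W, Cc, htG, hW, hfact⟩ := exists_orthonormal_factorization G
  have hkey := key_ineq hrn hrm (le_trans htG hGrank) σ hσnonneg hσmono S hS W hW Cc
  rw [← hfact] at hkey
  calc frobSq (Y - X * (Cᵀ * Vr * Vrᵀ))
      = frobSq (S - S * (E * Eᵀ)) := by rw [hconj, hL]
    _ = ∑ j : Fin m, (if r ≤ (j : ℕ) ∧ (j : ℕ) < n then σ (j : ℕ) ^ 2 else 0) := hT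
    _ ≤ frobSq (S - G) := hkey
    _ = frobSq (Y - X * β) := (hconj (X * β)).symm

end Main

/-- With `Y = X Cᵀ`, `X` of full column rank `d`, and SVD `Y = U Σ Vᵀ`
(singular values `σ` in decreasing order, with the `r`-th strictly distinct from the
`(r+1)`-th), the reduced-rank regression solution `β_RRR = Cᵀ V_r V_rᵀ` minimizes
`‖Y − Xβ‖_F²` over all `β` with `rank β ≤ r`. -/
theorem stmt5 (n d m r : ℕ) (hrn : r ≤ n) (hrm : r ≤ m)
    (X : Matrix (Fin n) (Fin d) ℝ) (hX : X.rank = d)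
    (C : Matrix (Fin m) (Fin d) ℝ)
    (Y : Matrix (Fin n) (Fin m) ℝ) (hY : Y = X * Cᵀ)
    (U : Matrix (Fin n) (Fin n) ℝ) (V : Matrix (Fin m) (Fin m) ℝ)
    (S : Matrix (Fin n) (Fin m) ℝ) (σ : ℕ → ℝ)
    (hU : Uᵀ * U = 1) (hU' : U * Uᵀ = 1)
    (hV : Vᵀ * V = 1) (hV' : V * Vᵀ = 1)
    (hS : ∀ (i : Fin n) (j : Fin m), S i j = if (i : ℕ) = (j : ℕ) then σ i else 0)
    (hσnonneg : ∀ i, 0 ≤ σ i) (hσmono : ∀ i j, i ≤ j → σ j ≤ σ i)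
    (hgap : σ (r - 1) ≠ σ r)
    (hSVD : Y = U * S * Vᵀ)
    (Vr : Matrix (Fin m) (Fin r) ℝ)
    (hVr : Vr = V.submatrix id (Fin.castLE hrm)) :
    ∀ β : Matrix (Fin d) (Fin m) ℝ, β.rank ≤ r →
      frobSq (Y - X * (Cᵀ * Vr * Vrᵀ)) ≤ frobSq (Y - X * β) :=
  stmt5_main n d m r hrn hrm X C Y hY U V S σ hU hU' hV hV' hS hσnonneg hσmono hSVD Vr hVr
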